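/- If F is an invertible Lie transform, then its inverse transform F⁻¹ is also a Lie transform. -/

import Mathlib

/-- A transform: a sequence of functions `F_n : ℂⁿ → ℂ` for `n ≥ 1`
(the `n = 0` component is irrelevant). -/
def Transform := ∀ n : ℕ, (Fin n → ℂ) → ℂ

/-- The composite transform:
`(G∘F)_n(z₁,…,z_n) = Σ_{0=i₀<⋯<i_k=n} G_k(Σ_{block 1} z, …, Σ_{block k} z) ∏_j F_{|block j|}(z|_{block j})`. -/
noncomputable def tComp (G F : Transform) : Transform := fun n z =>
  ∑ c : Composition n,
    G c.length (fun j => ∑ i, z (c.embedding j i)) *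
      ∏ j, F (c.blocksFun j) (z ∘ c.embedding j)

/-- The identity transform: `id₁ ≡ 1`, `id_n ≡ 0` for `n ≠ 1`. -/
def tId : Transform := fun n _ => if n = 1 then 1 else 0

/-- `G` is a two-sided compositional inverse of the transform `F`. -/
def TInverse (F G : Transform) : Prop :=
  (∀ n : ℕ, 1 ≤ n → ∀ z : Fin n → ℂ, tComp G F n z = tId n z) ∧
  (∀ n : ℕ, 1 ≤ n → ∀ z : Fin n → ℂ, tComp F G n z = tId n z)

attribute [local instance 100] LieRing.ofAssociativeRing

/-- A transform `F` is a Lie transform if each symmetrised sum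
`Σ_σ F_n(z_{σ(1)},…,z_{σ(n)}) x_{σ(1)} ⋯ x_{σ(n)}` in the free associative algebra on
`x₁,…,x_n` lies in the Lie subalgebra generated by the `x_i` (under the commutator). -/
def IsLieTransform (F : Transform) : Prop :=
  ∀ n : ℕ, 1 ≤ n → ∀ z : Fin n → ℂ,
    (∑ σ : Equiv.Perm (Fin n),
        F n (z ∘ σ) • (List.ofFn fun i => FreeAlgebra.ι ℂ (σ i)).prod) ∈
      LieSubalgebra.lieSpan ℂ (FreeAlgebra ℂ (Fin n)) (Set.range (FreeAlgebra.ι ℂ))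

noncomputable section Aux


noncomputable section Infra

instance {n : ℕ} : DecidableEq (Composition n) := fun a b =>
  decidable_of_iff (a.blocks = b.blocks) ⟨fun h => Composition.ext h, fun h => by rw [h]⟩

theorem listProd_smul {R A : Type*} [CommSemiring R] [Semiring A] [Algebra R A] :
    ∀ {m : ℕ} (a : Fin m → R) (x : Fin m → A),
      (List.ofFn fun j => a j • x j).prod = (∏ j, a j) • (List.ofFn x).prod
  | 0, a, x => by simp
  | m + 1, a, x => by
    rw [List.ofFn_succ, List.ofFn_succ, List.prod_cons, List.prod_cons,
      listProd_smul (fun j => a j.succ) (fun j => x j.succ), Fin.prod_univ_succ,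
      smul_mul_smul_comm]

theorem listProd_sum {A : Type*} [NonAssocSemiring A] :
    ∀ {m : ℕ} (κ : Fin m → Type) [∀ j, Fintype (κ j)] (f : ∀ j, κ j → A),
      (List.ofFn fun j => ∑ x : κ j, f j x).prod
        = ∑ T : ∀ j, κ j, (List.ofFn fun j => f j (T j)).prod
  | 0, κ, _, f => by
    simp only [List.ofFn_zero, List.prod_nil, Finset.sum_const, Finset.card_univ]
    simp
  | m + 1, κ, _, f => by
    rw [List.ofFn_succ, List.prod_cons]
    rw [listProd_sum (fun j => κ j.succ) (fun j x => f j.succ x)]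
    rw [Finset.sum_mul_sum]
    rw [← Fintype.sum_prod_type
      (f := fun p : κ 0 × (∀ j : Fin m, κ j.succ) =>
        f 0 p.1 * (List.ofFn fun j => f j.succ (p.2 j)).prod)]
    refine Fintype.sum_equiv (Fin.consEquiv κ) _ _ (fun p => ?_)
    rw [List.ofFn_succ, List.prod_cons]
    simp [Fin.consEquiv]

theorem sum_take_add_lt (bs : List ℕ) (j : Fin bs.length) (i : Fin bs[(j : ℕ)]) :
    (bs.take j).sum + i < bs.sum := by
  have h1 := List.sum_take_succ bs j j.isLt
  have h2 : (bs.take ((j : ℕ) + 1)).sum ≤ bs.sum := by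
    conv_rhs => rw [← List.take_append_drop ((j : ℕ) + 1) bs]
    rw [List.sum_append]
    omega
  have := i.isLt
  omega

theorem prod_ofFn_split {M : Type*} [Monoid M] :
    ∀ (bs : List ℕ) (g : Fin bs.sum → M),
      (List.ofFn g).prod =
        (List.ofFn fun j : Fin bs.length =>
          (List.ofFn fun i : Fin bs[(j : ℕ)] =>
            g ⟨(bs.take j).sum + i, sum_take_add_lt bs j i⟩).prod).prod
  | [], g => by exact (congrArg List.prod (List.ofFn_zero (f := g))).trans List.prod_nil
  | b :: bs, g => by
    have hL : (List.ofFn g).prod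
        = (List.ofFn fun i : Fin b => g (Fin.castAdd bs.sum i)).prod *
          (List.ofFn fun i : Fin bs.sum => g (Fin.natAdd b i)).prod := by
      rw [← List.prod_append]
      exact congrArg List.prod (List.ofFn_add (n := b) (m := bs.sum) (f := g))
    rw [hL, prod_ofFn_split bs (fun i => g (Fin.natAdd b i)), List.ofFn_succ, List.prod_cons]
    simp only [Fin.val_zero, Fin.val_succ, List.getElem_cons_zero, List.getElem_cons_succ,
      List.take_zero, List.take_succ_cons, List.sum_nil, List.sum_cons, Nat.zero_add]
    congr 1
    all_goals
      refine congrArg List.prod (List.ext_getElem (by simp) fun a ha1 ha2 => ?_)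
      simp only [List.getElem_ofFn]
      first
      | (apply congrArg; rw [Fin.ext_iff]; simp)
      | (refine congrArg List.prod (List.ext_getElem (by simp) fun a2 hb1 hb2 => ?_)
         simp only [List.getElem_ofFn]
         apply congrArg
         apply Fin.ext
         simp
         try exact (Fin.val_natAdd _ _).trans (Nat.add_assoc _ _ _).symm
         try omega)

theorem Composition.prod_split {M : Type*} [Monoid M] {n : ℕ} (c : Composition n)
    (g : Fin n → M) :
    (List.ofFn g).prod =
      (List.ofFn fun j : Fin c.length =>
        (List.ofFn fun i : Fin (c.blocksFun j) => g (c.embedding j i)).prod).prod := by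
  obtain ⟨bs, hpos, hsum⟩ := c
  subst hsum
  rw [prod_ofFn_split bs g]
  rfl

end Infra



noncomputable section Infra2

abbrev FA (n : ℕ) := FreeAlgebra ℂ (Fin n)

def LS (n : ℕ) : LieSubalgebra ℂ (FA n) :=
  LieSubalgebra.lieSpan ℂ (FA n) (Set.range (FreeAlgebra.ι ℂ))

def wd {n m : ℕ} (f : Fin m → Fin n) : FA n :=
  (List.ofFn fun i => FreeAlgebra.ι ℂ (f i)).prod

theorem lie_sum_mem' {L : Type*} [LieRing L] [LieAlgebra ℂ L] (K : LieSubalgebra ℂ L)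
    {ι : Type*} (s : Finset ι) (f : ι → L) (h : ∀ i ∈ s, f i ∈ K) : ∑ i ∈ s, f i ∈ K := by
  have := K.toSubmodule.sum_mem (t := s) (f := f) (fun i hi => by
    rw [LieSubalgebra.mem_toSubmodule]; exact h i hi)
  rwa [LieSubalgebra.mem_toSubmodule] at this

theorem lift_mem_lieSpan {k n : ℕ} (Y : Fin k → FA n) (hY : ∀ j, Y j ∈ LS n) {a : FA k}
    (ha : a ∈ LS k) : FreeAlgebra.lift ℂ Y a ∈ LS n := by
  have h : LS k ≤ LieSubalgebra.comap (AlgHom.toLieHom (FreeAlgebra.lift ℂ Y)) (LS n) := by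
    apply LieSubalgebra.lieSpan_le.mpr
    rintro x ⟨i, rfl⟩
    show FreeAlgebra.lift ℂ Y (FreeAlgebra.ι ℂ i) ∈ LS n
    rw [FreeAlgebra.lift_ι_apply]
    exact hY i
  exact h ha

theorem transform_cast (H : Transform) {m m' : ℕ} (h : m = m') (f : Fin m → ℂ)
    (g : Fin m' → ℂ) (hfg : ∀ i : Fin m', f (Fin.cast h.symm i) = g i) : H m f = H m' g := by
  subst h
  exact congrArg _ (funext fun i => by simpa using hfg i)

theorem lift_symb {k n : ℕ} (Y : Fin k → FA n) (H : Transform) (w : Fin k → ℂ) :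
    FreeAlgebra.lift ℂ Y (∑ σ : Equiv.Perm (Fin k), H k (w ∘ σ) • wd (⇑σ))
      = ∑ σ : Equiv.Perm (Fin k), H k (w ∘ σ) • (List.ofFn fun i => Y (σ i)).prod := by
  rw [map_sum]
  refine Finset.sum_congr rfl fun σ _ => ?_
  rw [map_smul]
  congr 1
  rw [wd, map_list_prod, List.map_ofFn]
  simp only [Function.comp_def, FreeAlgebra.lift_ι_apply]

theorem class_sum_mem {α : Type*} {κ : Type*} [DecidableEq κ]
    {L : Type*} [LieRing L] [LieAlgebra ℂ L] (K : LieSubalgebra ℂ L)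
    (S : Finset α) (key : α → κ) (f : α → L)
    (hcls : ∀ p ∈ S, ∑ q ∈ S.filter (fun q => key q = key p), f q ∈ K) :
    ∑ p ∈ S, f p ∈ K := by
  classical
  set c : α → ℕ := fun p => (S.filter (fun q => key q = key p)).card with hc
  have hmain : ∑ p ∈ S, f p
      = ∑ p ∈ S, ((c p : ℂ))⁻¹ • ∑ q ∈ S.filter (fun q => key q = key p), f q := by
    have step1 : ∀ p, ((c p : ℂ))⁻¹ • ∑ q ∈ S.filter (fun q => key q = key p), f q
        = ∑ q ∈ S, if key q = key p then ((c p : ℂ))⁻¹ • f q else 0 := by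
      intro p
      rw [Finset.smul_sum, Finset.sum_filter]
    rw [Finset.sum_congr rfl fun p (_ : p ∈ S) => step1 p]
    rw [Finset.sum_comm]
    refine (Finset.sum_congr rfl fun q hq => ?_).symm
    have hcq : ∀ p ∈ S, key p = key q → c p = c q := by
      intro p _ hkey
      simp only [hc, hkey]
    have : ∑ p ∈ S, (if key q = key p then ((c p : ℂ))⁻¹ • f q else 0)
        = ∑ p ∈ S, (if key p = key q then ((c q : ℂ))⁻¹ • f q else 0) := by
      refine Finset.sum_congr rfl fun p hp => ?_
      by_cases h : key p = key q
      · rw [if_pos h.symm, if_pos h, hcq p hp h]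
      · rw [if_neg (fun hh => h hh.symm), if_neg h]
    rw [this, ← Finset.sum_filter, Finset.sum_const]
    have hcard : (S.filter (fun p => key p = key q)).card = c q := rfl
    rw [hcard]
    have hne : (c q : ℂ) ≠ 0 := by
      have : q ∈ S.filter (fun p => key p = key q) := by
        simp [Finset.mem_filter, hq]
      have hpos : 0 < c q := Finset.card_pos.mpr ⟨q, this⟩
      exact_mod_cast Nat.pos_iff_ne_zero.mp hpos
    rw [← Nat.cast_smul_eq_nsmul ℂ, smul_smul, mul_inv_cancel₀ hne, one_smul]
  rw [hmain]
  exact lie_sum_mem' K _ _ fun p hp => K.smul_mem _ (hcls p hp)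

end Infra2


noncomputable section Blocks
open Equiv

variable {n : ℕ}

/-- The block of `p = (c, σ)` with index `j`, as a set: `{σ (c.embedding j i) | i}`. -/
def bset (p : Composition n × Equiv.Perm (Fin n)) (j : Fin p.1.length) : Finset (Fin n) :=
  Finset.image (fun i => p.2 (p.1.embedding j i)) Finset.univ

lemma mem_bset {p : Composition n × Equiv.Perm (Fin n)} {j : Fin p.1.length} {x : Fin n} :
    x ∈ bset p j ↔ ∃ i, p.2 (p.1.embedding j i) = x := by simp [bset]

lemma bset_nonempty (p : Composition n × Equiv.Perm (Fin n)) (j : Fin p.1.length) :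
    (bset p j).Nonempty :=
  ⟨p.2 (p.1.embedding j ⟨0, p.1.one_le_blocksFun j⟩), mem_bset.mpr ⟨_, rfl⟩⟩

lemma bset_eq_of_mem {p : Composition n × Equiv.Perm (Fin n)} {j j' : Fin p.1.length}
    {x : Fin n} (h : x ∈ bset p j) (h' : x ∈ bset p j') : j = j' := by
  obtain ⟨i, hi⟩ := mem_bset.mp h
  obtain ⟨i', hi'⟩ := mem_bset.mp h'
  by_contra hne
  have hd := p.1.disjoint_range hne
  have he : p.1.embedding j i = p.1.embedding j' i' := p.2.injective (hi.trans hi'.symm)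
  exact Set.disjoint_left.mp hd ⟨i, rfl⟩ (he ▸ ⟨i', rfl⟩)

lemma bset_injective (p : Composition n × Equiv.Perm (Fin n)) : Function.Injective (bset p) := by
  intro j j' h
  obtain ⟨x, hx⟩ := bset_nonempty p j
  exact bset_eq_of_mem hx (h ▸ hx)

lemma card_bset (p : Composition n × Equiv.Perm (Fin n)) (j : Fin p.1.length) :
    (bset p j).card = p.1.blocksFun j := by
  rw [bset, Finset.card_image_of_injective _
    (show Function.Injective (fun i => p.2 (p.1.embedding j i)) from
      fun a b h => (p.1.embedding j).injective (p.2.injective h)),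
    Finset.card_univ, Fintype.card_fin]

/-- The unordered partition underlying `p`. -/
def pkey (p : Composition n × Equiv.Perm (Fin n)) : Finset (Finset (Fin n)) :=
  Finset.image (fun j => bset p j) Finset.univ

lemma mem_pkey {p : Composition n × Equiv.Perm (Fin n)} {B : Finset (Fin n)} :
    B ∈ pkey p ↔ ∃ j, bset p j = B := by simp [pkey]

lemma card_pkey (p : Composition n × Equiv.Perm (Fin n)) : (pkey p).card = p.1.length := by
  rw [pkey, Finset.card_image_of_injective _ (bset_injective p), Finset.card_univ,
    Fintype.card_fin]

/-- Composition obtained by permuting the blocks of `c₀` by `π`. -/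
def mkComp (c₀ : Composition n) (π : Equiv.Perm (Fin c₀.length)) : Composition n where
  blocks := List.ofFn fun j => c₀.blocksFun (π j)
  blocks_pos := by
    intro i hi
    rw [List.mem_ofFn] at hi
    obtain ⟨j, rfl⟩ := hi
    exact c₀.one_le_blocksFun _
  blocks_sum := by
    rw [List.sum_ofFn, Equiv.sum_comp π c₀.blocksFun, c₀.sum_blocksFun]

lemma mkComp_length (c₀ : Composition n) (π : Equiv.Perm (Fin c₀.length)) :
    (mkComp c₀ π).length = c₀.length := by
  simp [mkComp, Composition.length]

lemma mkComp_blocksFun (c₀ : Composition n) (π : Equiv.Perm (Fin c₀.length))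
    (j : Fin (mkComp c₀ π).length) :
    (mkComp c₀ π).blocksFun j = c₀.blocksFun (π (Fin.cast (mkComp_length c₀ π) j)) := by
  simp only [Composition.blocksFun, mkComp, List.get_eq_getElem, List.getElem_ofFn]
  exact List.getElem_ofFn _

/-- The permutation built from base pair `(c₀, σ₀)`, block permutation `π` and
within-block permutations `T`. -/
def mkPerm (c₀ : Composition n) (σ₀ : Equiv.Perm (Fin n)) (π : Equiv.Perm (Fin c₀.length))
    (T : ∀ j, Equiv.Perm (Fin (c₀.blocksFun j))) : Equiv.Perm (Fin n) :=
  ((mkComp c₀ π).blocksFinEquiv.symm.trans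
    (((Equiv.sigmaCongr (finCongr (mkComp_length c₀ π))
        (fun j => finCongr (mkComp_blocksFun c₀ π j))).trans
      ((Equiv.sigmaCongrRight (fun j => T (π j))).trans
        (Equiv.sigmaCongr (π : Fin c₀.length ≃ Fin c₀.length)
          (fun j => Equiv.refl (Fin (c₀.blocksFun (π j))))))).trans
      c₀.blocksFinEquiv)).trans (σ₀ : Equiv.Perm (Fin n))

lemma blocksFinEquiv_symm_embedding (c : Composition n) (j : Fin c.length)
    (i : Fin (c.blocksFun j)) : c.blocksFinEquiv.symm (c.embedding j i) = ⟨j, i⟩ :=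
  c.blocksFinEquiv.symm_apply_eq.mpr rfl

lemma mkPerm_apply (c₀ : Composition n) (σ₀ : Equiv.Perm (Fin n))
    (π : Equiv.Perm (Fin c₀.length)) (T : ∀ j, Equiv.Perm (Fin (c₀.blocksFun j)))
    (j : Fin (mkComp c₀ π).length) (i : Fin ((mkComp c₀ π).blocksFun j)) :
    mkPerm c₀ σ₀ π T ((mkComp c₀ π).embedding j i)
      = σ₀ (c₀.embedding (π (Fin.cast (mkComp_length c₀ π) j))
          (T (π (Fin.cast (mkComp_length c₀ π) j)) (Fin.cast (mkComp_blocksFun c₀ π j) i))) := by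
  simp only [mkPerm, Equiv.trans_apply, blocksFinEquiv_symm_embedding,
    Equiv.sigmaCongr, Equiv.sigmaCongrRight, Equiv.coe_fn_mk, Sigma.map, finCongr_apply,
    Equiv.refl_apply]
  rfl

end Blocks

noncomputable section Phi
open Equiv

variable {n : ℕ}

lemma Composition.embedding_congr {c c' : Composition n} (h : c = c')
    (j : Fin c.length) (i : Fin (c.blocksFun j)) :
    c.embedding j i = c'.embedding (Fin.cast (congrArg Composition.length h) j)
      (Fin.cast (by subst h; rfl) i) := by subst h; rfl

lemma embedding_val_congr (c : Composition n) {j j' : Fin c.length} (hj : (j : ℕ) = j')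
    {i : Fin (c.blocksFun j)} {i' : Fin (c.blocksFun j')} (hi : (i : ℕ) = i') :
    c.embedding j i = c.embedding j' i' := by
  have hjj : j = j' := Fin.ext hj
  subst hjj
  have hii : i = i' := Fin.ext hi
  subst hii
  rfl

variable (c₀ : Composition n) (σ₀ : Equiv.Perm (Fin n))

lemma bset_mk (π : Equiv.Perm (Fin c₀.length)) (T : ∀ j, Equiv.Perm (Fin (c₀.blocksFun j)))
    (j : Fin (mkComp c₀ π).length) :
    bset (mkComp c₀ π, mkPerm c₀ σ₀ π T) j
      = bset (c₀, σ₀) (π (Fin.cast (mkComp_length c₀ π) j)) := by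
  ext x
  simp only [mem_bset]
  constructor
  · rintro ⟨i, rfl⟩
    rw [mkPerm_apply]
    exact ⟨_, rfl⟩
  · rintro ⟨i, rfl⟩
    refine ⟨Fin.cast (mkComp_blocksFun c₀ π j).symm
      ((T (π (Fin.cast (mkComp_length c₀ π) j))).symm i), ?_⟩
    rw [mkPerm_apply]
    congr 1
    congr 1
    have hcc : Fin.cast (mkComp_blocksFun c₀ π j)
        (Fin.cast (mkComp_blocksFun c₀ π j).symm
          ((T (π (Fin.cast (mkComp_length c₀ π) j))).symm i))
        = (T (π (Fin.cast (mkComp_length c₀ π) j))).symm i := rfl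
    rw [hcc, Equiv.apply_symm_apply]

lemma pkey_mk (π : Equiv.Perm (Fin c₀.length)) (T : ∀ j, Equiv.Perm (Fin (c₀.blocksFun j))) :
    pkey (mkComp c₀ π, mkPerm c₀ σ₀ π T) = pkey (c₀, σ₀) := by
  ext B
  simp only [mem_pkey]
  constructor
  · rintro ⟨j, rfl⟩
    exact ⟨_, (bset_mk c₀ σ₀ π T j).symm⟩
  · rintro ⟨j₀, rfl⟩
    refine ⟨Fin.cast (mkComp_length c₀ π).symm (π.symm j₀), ?_⟩
    rw [bset_mk]
    congr 1
    have : Fin.cast (mkComp_length c₀ π) (Fin.cast (mkComp_length c₀ π).symm (π.symm j₀))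
        = π.symm j₀ := rfl
    rw [this, Equiv.apply_symm_apply]

lemma mk_inj : Function.Injective
    (fun g : Equiv.Perm (Fin c₀.length) × (∀ j, Equiv.Perm (Fin (c₀.blocksFun j))) =>
      ((mkComp c₀ g.1, mkPerm c₀ σ₀ g.1 g.2) : Composition n × Equiv.Perm (Fin n))) := by
  rintro ⟨π, T⟩ ⟨π', T'⟩ h
  simp only [Prod.mk.injEq] at h
  obtain ⟨h1, h2⟩ := h
  -- first: π = π'
  have hπ : π = π' := by
    ext j₀
    set j : Fin (mkComp c₀ π).length := Fin.cast (mkComp_length c₀ π).symm j₀ with hj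
    have hjv : π (Fin.cast (mkComp_length c₀ π) j) = π j₀ := rfl
    set i : Fin ((mkComp c₀ π).blocksFun j) := ⟨0, (mkComp c₀ π).one_le_blocksFun j⟩ with hi
    have hmem1 : mkPerm c₀ σ₀ π T ((mkComp c₀ π).embedding j i) ∈ bset (c₀, σ₀) (π j₀) := by
      rw [mkPerm_apply]
      exact mem_bset.mpr ⟨_, rfl⟩
    have hmem2 : mkPerm c₀ σ₀ π T ((mkComp c₀ π).embedding j i) ∈ bset (c₀, σ₀) (π' j₀) := by
      rw [h2, Composition.embedding_congr h1 j i, mkPerm_apply]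
      exact mem_bset.mpr ⟨_, rfl⟩
    exact congrArg Fin.val (bset_eq_of_mem hmem1 hmem2)
  subst hπ
  simp only [Prod.mk.injEq, true_and]
  -- now T = T'
  funext j₀
  ext i₀
  -- choose j, i so that π ĵ = j₀ and î = i₀
  have key : ∀ (j : Fin (mkComp c₀ π).length) (i : Fin ((mkComp c₀ π).blocksFun j)),
      T (π (Fin.cast (mkComp_length c₀ π) j)) (Fin.cast (mkComp_blocksFun c₀ π j) i)
        = T' (π (Fin.cast (mkComp_length c₀ π) j)) (Fin.cast (mkComp_blocksFun c₀ π j) i) := by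
    intro j i
    have := DFunLike.congr_fun h2 ((mkComp c₀ π).embedding j i)
    rw [mkPerm_apply, mkPerm_apply] at this
    exact (c₀.embedding _).injective (σ₀.injective this)
  have hj0 : π (Fin.cast (mkComp_length c₀ π) (Fin.cast (mkComp_length c₀ π).symm (π.symm j₀)))
      = j₀ := by
    have : Fin.cast (mkComp_length c₀ π) (Fin.cast (mkComp_length c₀ π).symm (π.symm j₀))
        = π.symm j₀ := rfl
    rw [this, Equiv.apply_symm_apply]
  revert i₀
  rw [← hj0]
  intro i₀
  have := key (Fin.cast (mkComp_length c₀ π).symm (π.symm j₀))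
    (Fin.cast (mkComp_blocksFun c₀ π _).symm i₀)
  exact congrArg Fin.val this

end Phi

noncomputable section Surj
open Equiv

variable {n : ℕ} (c₀ : Composition n) (σ₀ : Equiv.Perm (Fin n))

lemma mk_surj (q : Composition n × Equiv.Perm (Fin n)) (hkey : pkey q = pkey (c₀, σ₀)) :
    ∃ (π : Equiv.Perm (Fin c₀.length)) (T : ∀ j, Equiv.Perm (Fin (c₀.blocksFun j))),
      ((mkComp c₀ π, mkPerm c₀ σ₀ π T) : Composition n × Equiv.Perm (Fin n)) = q := by
  obtain ⟨c', σ'⟩ := q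
  have hlen' : c'.length = c₀.length := by
    rw [← card_pkey (c', σ'), ← card_pkey (c₀, σ₀), hkey]
  have hex : ∀ j : Fin c'.length, ∃ j₀ : Fin c₀.length,
      bset (c₀, σ₀) j₀ = bset (c', σ') j := by
    intro j
    have : bset (c', σ') j ∈ pkey (c₀, σ₀) := hkey ▸ mem_pkey.mpr ⟨j, rfl⟩
    exact mem_pkey.mp this
  choose ρ hρ using hex
  have hρinj : Function.Injective ρ := by
    intro a b hab
    apply bset_injective (c', σ')
    rw [← hρ a, ← hρ b, hab]
  have hρ'inj : Function.Injective (fun j : Fin c₀.length => ρ (Fin.cast hlen'.symm j)) := by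
    intro a b hab
    have h5 := hρinj hab
    have h6 := congrArg Fin.val h5
    exact Fin.ext h6
  let π : Equiv.Perm (Fin c₀.length) :=
    Equiv.ofBijective _ (Finite.injective_iff_bijective.mp hρ'inj)
  have hπ : ∀ j : Fin c₀.length, π j = ρ (Fin.cast hlen'.symm j) := fun _ => rfl
  have hb : ∀ j : Fin c'.length, c'.blocksFun j = c₀.blocksFun (ρ j) := by
    intro j
    rw [← card_bset (c', σ') j, ← card_bset (c₀, σ₀) (ρ j), hρ j]
  have hρπ : ∀ j₀ : Fin c₀.length, ρ (Fin.cast hlen'.symm (π.symm j₀)) = j₀ := by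
    intro j₀
    have := π.apply_symm_apply j₀
    rwa [hπ] at this
  have hbj : ∀ j₀ : Fin c₀.length,
      c'.blocksFun (Fin.cast hlen'.symm (π.symm j₀)) = c₀.blocksFun j₀ := by
    intro j₀
    rw [hb, hρπ]
  -- the composition component
  have hc : mkComp c₀ π = c' := by
    apply Composition.ext
    apply List.ext_getElem
    · simp [mkComp, hlen', Composition.blocks_length]
    · intro a h1 h2
      simp only [mkComp, List.getElem_ofFn]
      have ha' : a < c'.length := by simpa [Composition.blocks_length] using h2
      have : c₀.blocksFun (π ⟨a, by simpa [mkComp] using h1⟩)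
          = c'.blocksFun ⟨a, ha'⟩ := by
        rw [hπ, ← hb]
        congr 1
      exact this
  -- the within-block permutations
  have hT : ∀ j₀ : Fin c₀.length, ∃ τ : Equiv.Perm (Fin (c₀.blocksFun j₀)),
      ∀ i, σ₀ (c₀.embedding j₀ (τ i))
        = σ' (c'.embedding (Fin.cast hlen'.symm (π.symm j₀)) (Fin.cast (hbj j₀).symm i)) := by
    intro j₀
    have hne : Nonempty (Fin (c₀.blocksFun j₀)) := ⟨⟨0, c₀.one_le_blocksFun j₀⟩⟩
    set e₁ : Fin (c₀.blocksFun j₀) → Fin n := fun i => σ₀ (c₀.embedding j₀ i) with he₁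
    set e₂ : Fin (c₀.blocksFun j₀) → Fin n := fun i =>
      σ' (c'.embedding (Fin.cast hlen'.symm (π.symm j₀)) (Fin.cast (hbj j₀).symm i)) with he₂
    have hmem : ∀ i, ∃ i', e₁ i' = e₂ i := by
      intro i
      have h2 : e₂ i ∈ bset (c', σ') (Fin.cast hlen'.symm (π.symm j₀)) :=
        mem_bset.mpr ⟨_, rfl⟩
      have h3 : e₂ i ∈ bset (c₀, σ₀) j₀ := by
        rw [← hρπ j₀, hρ]
        exact h2
      exact mem_bset.mp h3
    choose t ht using hmem
    have htinj : Function.Injective t := by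
      intro a b hab
      have : e₂ a = e₂ b := by rw [← ht a, ← ht b, hab]
      have h4 : Fin.cast (hbj j₀).symm a = Fin.cast (hbj j₀).symm b :=
        (c'.embedding _).injective (σ'.injective this)
      have h5 := congrArg Fin.val h4
      exact Fin.ext h5
    refine ⟨Equiv.ofBijective t (Finite.injective_iff_bijective.mp htinj), fun i => ht i⟩
  choose T hTspec using hT
  refine ⟨π, T, Prod.ext hc ?_⟩
  ext x
  obtain ⟨⟨j, i⟩, rfl⟩ := (mkComp c₀ π).blocksFinEquiv.surjective x
  have hx : (mkComp c₀ π).blocksFinEquiv ⟨j, i⟩ = (mkComp c₀ π).embedding j i := rfl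
  rw [hx]
  have lhs := mkPerm_apply c₀ σ₀ π T j i
  rw [lhs]
  have rhs := hTspec (π (Fin.cast (mkComp_length c₀ π) j))
    (Fin.cast (mkComp_blocksFun c₀ π j) i)
  rw [rhs]
  have hsz : (mkComp c₀ π).sizeUpTo = c'.sizeUpTo := by rw [hc]
  refine congrArg (fun y : Fin n => (σ' y : ℕ)) (Fin.ext ?_)
  rw [Composition.coe_embedding, Composition.coe_embedding, hsz]
  simp

end Surj



theorem List.ofFn_cast {α : Type*} {m m' : ℕ} (h : m = m') (f : Fin m → α) :
    List.ofFn (fun i : Fin m' => f (Fin.cast h.symm i)) = List.ofFn f := by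
  subst h; rfl

theorem ofFn_funext {α : Type*} {m : ℕ} {f g : Fin m → α} (h : ∀ i, f i = g i) :
    List.ofFn f = List.ofFn g := congrArg _ (funext h)

/-- coefficient of the pair `(c, σ)` in the expansion. -/
noncomputable def coeffGF (G F : Transform) {n : ℕ} (z : Fin n → ℂ)
    (p : Composition n × Equiv.Perm (Fin n)) : ℂ :=
  G p.1.length (fun j => ∑ i, z (p.2 (p.1.embedding j i))) *
    ∏ j, F (p.1.blocksFun j) (fun i => z (p.2 (p.1.embedding j i)))

theorem fiber_mem (G F : Transform) {n : ℕ} (z : Fin n → ℂ) (c₀ : Composition n)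
    (σ₀ : Equiv.Perm (Fin n))
    (hY : ∀ j₀ : Fin c₀.length,
      (∑ τ : Equiv.Perm (Fin (c₀.blocksFun j₀)),
        F (c₀.blocksFun j₀) ((fun i => z (σ₀ (c₀.embedding j₀ i))) ∘ τ) •
          (List.ofFn fun i => FreeAlgebra.ι ℂ (σ₀ (c₀.embedding j₀ (τ i)))).prod) ∈ LS n)
    (hG : (∑ π : Equiv.Perm (Fin c₀.length),
        G c₀.length ((fun j₀ => ∑ i, z (σ₀ (c₀.embedding j₀ i))) ∘ π) •
          (List.ofFn fun i => FreeAlgebra.ι ℂ (π i)).prod)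
        ∈ LieSubalgebra.lieSpan ℂ (FreeAlgebra ℂ (Fin c₀.length))
            (Set.range (FreeAlgebra.ι ℂ))) :
    (∑ g : Equiv.Perm (Fin c₀.length) × (∀ j, Equiv.Perm (Fin (c₀.blocksFun j))),
      coeffGF G F z (mkComp c₀ g.1, mkPerm c₀ σ₀ g.1 g.2) • wd ⇑(mkPerm c₀ σ₀ g.1 g.2))
      ∈ LS n := by
  set w : Fin c₀.length → ℂ := fun j₀ => ∑ i, z (σ₀ (c₀.embedding j₀ i)) with hw
  set Y : Fin c₀.length → FA n := fun j₀ =>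
    ∑ τ : Equiv.Perm (Fin (c₀.blocksFun j₀)),
      F (c₀.blocksFun j₀) ((fun i => z (σ₀ (c₀.embedding j₀ i))) ∘ τ) •
        (List.ofFn fun i => FreeAlgebra.ι ℂ (σ₀ (c₀.embedding j₀ (τ i)))).prod with hYdef
  suffices heq : (∑ g : Equiv.Perm (Fin c₀.length) × (∀ j, Equiv.Perm (Fin (c₀.blocksFun j))),
      coeffGF G F z (mkComp c₀ g.1, mkPerm c₀ σ₀ g.1 g.2) • wd ⇑(mkPerm c₀ σ₀ g.1 g.2))
      = FreeAlgebra.lift ℂ Y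
          (∑ π : Equiv.Perm (Fin c₀.length), G c₀.length (w ∘ π) • wd (⇑π)) by
    rw [heq]
    exact lift_mem_lieSpan Y (fun j₀ => hY j₀) hG
  rw [lift_symb, Fintype.sum_prod_type]
  refine Finset.sum_congr rfl fun π _ => ?_
  have hexp : (List.ofFn fun j' => Y (π j')).prod
      = ∑ T : (∀ j₀, Equiv.Perm (Fin (c₀.blocksFun j₀))),
          (∏ j', F (c₀.blocksFun (π j'))
              ((fun i => z (σ₀ (c₀.embedding (π j') i))) ∘ (T (π j')))) •
          (List.ofFn fun j' => (List.ofFn fun i =>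
            FreeAlgebra.ι ℂ (σ₀ (c₀.embedding (π j') (T (π j') i)))).prod).prod := by
    calc (List.ofFn fun j' => Y (π j')).prod
        = ∑ T' : (∀ j', Equiv.Perm (Fin (c₀.blocksFun (π j')))),
            (List.ofFn fun j' =>
              F (c₀.blocksFun (π j')) ((fun i => z (σ₀ (c₀.embedding (π j') i))) ∘ (T' j')) •
              (List.ofFn fun i =>
                FreeAlgebra.ι ℂ (σ₀ (c₀.embedding (π j') (T' j' i)))).prod).prod :=
          listProd_sum (fun j' => Equiv.Perm (Fin (c₀.blocksFun (π j'))))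
            (fun j' τ =>
              F (c₀.blocksFun (π j')) ((fun i => z (σ₀ (c₀.embedding (π j') i))) ∘ τ) •
              (List.ofFn fun i =>
                FreeAlgebra.ι ℂ (σ₀ (c₀.embedding (π j') (τ i)))).prod)
      _ = ∑ T' : (∀ j', Equiv.Perm (Fin (c₀.blocksFun (π j')))),
            (∏ j', F (c₀.blocksFun (π j'))
              ((fun i => z (σ₀ (c₀.embedding (π j') i))) ∘ (T' j'))) •
            (List.ofFn fun j' => (List.ofFn fun i =>
              FreeAlgebra.ι ℂ (σ₀ (c₀.embedding (π j') (T' j' i)))).prod).prod :=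
          Finset.sum_congr rfl fun T' _ => listProd_smul _ _
      _ = _ :=
          (Fintype.sum_equiv
            (Equiv.piCongrLeft' (fun j₀ => Equiv.Perm (Fin (c₀.blocksFun j₀))) π.symm)
            _ _ (fun T => rfl)).symm
  rw [hexp, Finset.smul_sum]
  refine Finset.sum_congr rfl fun T _ => ?_
  rw [smul_smul]
  -- per-(π,T) identity
  have hGpart : G (mkComp c₀ π).length
      (fun j => ∑ i, z (mkPerm c₀ σ₀ π T ((mkComp c₀ π).embedding j i)))
      = G c₀.length (w ∘ π) := by
    refine transform_cast G (mkComp_length c₀ π) _ _ fun j' => ?_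
    exact Fintype.sum_equiv
      ((finCongr (mkComp_blocksFun c₀ π (Fin.cast (mkComp_length c₀ π).symm j'))).trans
        (T (π (Fin.cast (mkComp_length c₀ π) (Fin.cast (mkComp_length c₀ π).symm j')))))
      _ _ (fun i => by rw [mkPerm_apply]; rfl)
  have hFpart : (∏ j, F ((mkComp c₀ π).blocksFun j)
      (fun i => z (mkPerm c₀ σ₀ π T ((mkComp c₀ π).embedding j i))))
      = ∏ j', F (c₀.blocksFun (π j'))
          ((fun i => z (σ₀ (c₀.embedding (π j') i))) ∘ (T (π j'))) := by
    refine Fintype.prod_equiv (finCongr (mkComp_length c₀ π)) _ _ fun j => ?_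
    refine transform_cast F (mkComp_blocksFun c₀ π j) _ _ fun i => ?_
    rw [mkPerm_apply]
    rfl
  have hword : wd ⇑(mkPerm c₀ σ₀ π T)
      = (List.ofFn fun j' => (List.ofFn fun i =>
          FreeAlgebra.ι ℂ (σ₀ (c₀.embedding (π j') (T (π j') i)))).prod).prod := by
    rw [wd, Composition.prod_split (mkComp c₀ π)
      (fun x => FreeAlgebra.ι ℂ (mkPerm c₀ σ₀ π T x))]
    rw [← List.ofFn_cast (mkComp_length c₀ π)
      (fun j => (List.ofFn fun i =>
        FreeAlgebra.ι ℂ (mkPerm c₀ σ₀ π T ((mkComp c₀ π).embedding j i))).prod)]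
    refine congrArg List.prod (ofFn_funext fun j' => ?_)
    refine congrArg List.prod ?_
    rw [← List.ofFn_cast
      (show ((mkComp c₀ π).blocksFun (Fin.cast (mkComp_length c₀ π).symm j'))
          = c₀.blocksFun (π j') from mkComp_blocksFun c₀ π _)
      (fun i => FreeAlgebra.ι ℂ (mkPerm c₀ σ₀ π T
        ((mkComp c₀ π).embedding (Fin.cast (mkComp_length c₀ π).symm j') i)))]
    refine ofFn_funext fun i => ?_
    rw [mkPerm_apply]
    rfl
  rw [show coeffGF G F z (mkComp c₀ π, mkPerm c₀ σ₀ π T)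
      = G (mkComp c₀ π).length
          (fun j => ∑ i, z (mkPerm c₀ σ₀ π T ((mkComp c₀ π).embedding j i))) *
        ∏ j, F ((mkComp c₀ π).blocksFun j)
          (fun i => z (mkPerm c₀ σ₀ π T ((mkComp c₀ π).embedding j i))) from rfl]
  rw [hGpart, hFpart, hword]

theorem tComp_one (G F : Transform) (y : Fin 1 → ℂ) : tComp G F 1 y = G 1 y * F 1 y := by
  have huniq : ∀ c : Composition 1, c = Composition.ones 1 := fun c =>
    Composition.eq_ones_iff_length.mpr (le_antisymm c.length_le (c.length_pos_of_pos one_pos))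
  have hU : (Finset.univ : Finset (Composition 1)) = {Composition.ones 1} :=
    Finset.eq_singleton_iff_unique_mem.mpr ⟨Finset.mem_univ _, fun c _ => huniq c⟩
  rw [tComp, hU, Finset.sum_singleton]
  have hA : G (Composition.ones 1).length
      (fun j => ∑ i, y ((Composition.ones 1).embedding j i)) = G 1 y := by
    refine transform_cast G (Composition.ones_length 1) _ _ fun j' => ?_
    rw [Finset.sum_congr rfl fun i _ => (congrArg y (Subsingleton.elim _ j')),
      Finset.sum_const, Finset.card_univ, Fintype.card_fin, Composition.ones_blocksFun,
      one_nsmul]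
  have hB : (∏ j, F ((Composition.ones 1).blocksFun j)
      (y ∘ (Composition.ones 1).embedding j)) = F 1 y := by
    rw [Fintype.prod_equiv (finCongr (Composition.ones_length 1)) _
      (fun _ : Fin 1 => F 1 y) ?_]
    · exact Fin.prod_univ_one _
    · intro j
      refine transform_cast F (Composition.ones_blocksFun 1 j) _ _ fun i => ?_
      exact congrArg y (Subsingleton.elim _ _)
  rw [hA, hB]

theorem coeff_ones (G F : Transform) {n : ℕ} (z : Fin n → ℂ) (σ : Equiv.Perm (Fin n)) :
    coeffGF G F z (Composition.ones n, σ)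
      = (∏ i : Fin n, F 1 (fun _ => z i)) * G n (z ∘ σ) := by
  rw [show coeffGF G F z (Composition.ones n, σ)
      = G (Composition.ones n).length
          (fun j => ∑ i, z (σ ((Composition.ones n).embedding j i))) *
        ∏ j, F ((Composition.ones n).blocksFun j)
          (fun i => z (σ ((Composition.ones n).embedding j i))) from rfl]
  have hemb : ∀ (j' : Fin n)
      (i : Fin ((Composition.ones n).blocksFun (Fin.cast (Composition.ones_length n).symm j'))),
      z (σ ((Composition.ones n).embedding (Fin.cast (Composition.ones_length n).symm j') i))
        = z (σ j') := by
    intro j' i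
    refine congrArg (fun x => z (σ x)) (Fin.ext ?_)
    rw [Composition.coe_embedding]
    have h1 : (i : ℕ) < 1 := lt_of_lt_of_le i.isLt (le_of_eq (Composition.ones_blocksFun n _))
    have h2 := j'.isLt
    simp only [Composition.ones_sizeUpTo, Fin.coe_cast]
    omega
  have hA : G (Composition.ones n).length
      (fun j => ∑ i, z (σ ((Composition.ones n).embedding j i))) = G n (z ∘ σ) := by
    refine transform_cast G (Composition.ones_length n) _ _ fun j' => ?_
    rw [Finset.sum_congr rfl fun i _ => hemb j' i, Finset.sum_const, Finset.card_univ,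
      Fintype.card_fin, Composition.ones_blocksFun, one_nsmul]
    rfl
  have hB : (∏ j, F ((Composition.ones n).blocksFun j)
      (fun i => z (σ ((Composition.ones n).embedding j i))))
      = ∏ i : Fin n, F 1 (fun _ => z i) := by
    refine Eq.trans (Fintype.prod_equiv (finCongr (Composition.ones_length n))
        (fun j => F ((Composition.ones n).blocksFun j)
          (fun i => z (σ ((Composition.ones n).embedding j i))))
        (fun j' : Fin n => F 1 (fun _ => z (σ j'))) (fun j => ?_))
      (Equiv.prod_comp σ (fun x => F 1 (fun _ => z x)))
    refine transform_cast F (Composition.ones_blocksFun n j) _ _ fun i => ?_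
    exact hemb (finCongr (Composition.ones_length n) j) (Fin.cast (Composition.ones_blocksFun n j).symm i)
  rw [hA, hB, mul_comm]

/-- the inverse of an invertible Lie transform is a Lie transform. -/
theorem stmt17 (F : Transform) (hF : IsLieTransform F)
    (hinv : ∃ G : Transform, TInverse F G) :
    ∀ G : Transform, TInverse F G → IsLieTransform G := by
  intro G hTG
  have hGF := hTG.1
  have hF1 : ∀ y : Fin 1 → ℂ, G 1 y * F 1 y = 1 := by
    intro y
    have h := hGF 1 le_rfl y
    rw [tComp_one] at h
    simpa [tId] using h
  intro n
  induction n using Nat.strong_induction_on with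
  | _ n IH =>
  intro hn z
  by_cases h1 : n = 1
  · subst h1
    refine lie_sum_mem' _ _ _ fun σ _ => ?_
    refine LieSubalgebra.smul_mem _ _ ?_
    have hof : (List.ofFn fun i : Fin 1 => FreeAlgebra.ι ℂ (σ i)).prod
        = FreeAlgebra.ι ℂ (σ 0) := by simp
    rw [hof]
    exact LieSubalgebra.subset_lieSpan ⟨σ 0, rfl⟩
  · have hnpos : 0 < n := by omega
    have hzero : ∀ σ : Equiv.Perm (Fin n),
        ∑ c : Composition n, coeffGF G F z (c, σ) = 0 := by
      intro σ
      have h := hGF n hn (z ∘ σ)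
      have h2 : tId n (z ∘ σ) = 0 := by simp only [tId]; rw [if_neg h1]
      rw [h2] at h
      exact h
    have key0 : ∑ c : Composition n,
        ∑ σ : Equiv.Perm (Fin n), coeffGF G F z (c, σ) • wd ⇑σ = 0 := by
      have hσ : ∀ σ : Equiv.Perm (Fin n),
          ∑ c : Composition n, coeffGF G F z (c, σ) • wd ⇑σ = 0 := fun σ => by
        rw [← Finset.sum_smul, hzero σ, zero_smul]
      calc ∑ c : Composition n, ∑ σ : Equiv.Perm (Fin n), coeffGF G F z (c, σ) • wd ⇑σ
          = ∑ σ : Equiv.Perm (Fin n), ∑ c : Composition n, coeffGF G F z (c, σ) • wd ⇑σ :=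
            Finset.sum_comm
        _ = ∑ _σ : Equiv.Perm (Fin n), (0 : FA n) := Finset.sum_congr rfl fun σ _ => hσ σ
        _ = 0 := Finset.sum_const_zero
    rw [← Finset.add_sum_erase Finset.univ _ (Finset.mem_univ (Composition.ones n))] at key0
    have hones : (∑ σ : Equiv.Perm (Fin n), coeffGF G F z (Composition.ones n, σ) • wd ⇑σ)
        = (∏ i : Fin n, F 1 (fun _ => z i)) •
            ∑ σ : Equiv.Perm (Fin n),
              G n (z ∘ σ) • (List.ofFn fun i => FreeAlgebra.ι ℂ (σ i)).prod := by
      rw [Finset.smul_sum]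
      refine Finset.sum_congr rfl fun σ _ => ?_
      rw [coeff_ones, mul_smul]
      rfl
    rw [hones] at key0
    set P1 := ∏ i : Fin n, F 1 (fun _ => z i) with hP1
    have hP1ne : P1 ≠ 0 := by
      rw [hP1]
      refine Finset.prod_ne_zero_iff.mpr fun i _ => ?_
      intro h0
      have hcon := hF1 (fun _ => z i)
      rw [h0, mul_zero] at hcon
      exact one_ne_zero hcon.symm
    have hR : (∑ c ∈ Finset.univ.erase (Composition.ones n),
        ∑ σ : Equiv.Perm (Fin n), coeffGF G F z (c, σ) • wd ⇑σ) ∈ LS n := by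
      have hprod : (∑ p ∈ (Finset.univ.erase (Composition.ones n)) ×ˢ
              (Finset.univ : Finset (Equiv.Perm (Fin n))), coeffGF G F z p • wd ⇑p.2)
          = ∑ c ∈ Finset.univ.erase (Composition.ones n),
            ∑ σ : Equiv.Perm (Fin n), coeffGF G F z (c, σ) • wd ⇑σ :=
        Finset.sum_product (Finset.univ.erase (Composition.ones n))
          (Finset.univ : Finset (Equiv.Perm (Fin n)))
          (fun p => coeffGF G F z p • wd ⇑p.2)
      rw [← hprod]
      refine class_sum_mem (LS n) _ pkey _ fun p₀ hp₀ => ?_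
      obtain ⟨c₀, σ₀⟩ := p₀
      rw [Finset.mem_product, Finset.mem_erase] at hp₀
      have hc₀ : c₀ ≠ Composition.ones n := hp₀.1.1
      have hklt : c₀.length < n :=
        lt_of_le_of_ne c₀.length_le fun h => hc₀ (Composition.eq_ones_iff_length.mpr h)
      have hk1 : 1 ≤ c₀.length := c₀.length_pos_of_pos hnpos
      have hbij : (∑ q ∈ ((Finset.univ.erase (Composition.ones n)) ×ˢ
            (Finset.univ : Finset (Equiv.Perm (Fin n)))).filter
            (fun q => pkey q = pkey (c₀, σ₀)), coeffGF G F z q • wd ⇑q.2)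
          = ∑ g : Equiv.Perm (Fin c₀.length) × (∀ j, Equiv.Perm (Fin (c₀.blocksFun j))),
              coeffGF G F z (mkComp c₀ g.1, mkPerm c₀ σ₀ g.1 g.2) •
                wd ⇑(mkPerm c₀ σ₀ g.1 g.2) := by
        refine (Finset.sum_bij (fun g _ => (mkComp c₀ g.1, mkPerm c₀ σ₀ g.1 g.2))
          ?_ ?_ ?_ (fun g _ => rfl)).symm
        · intro g _
          rw [Finset.mem_filter]
          refine ⟨Finset.mem_product.mpr ⟨Finset.mem_erase.mpr ⟨?_, Finset.mem_univ _⟩,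
            Finset.mem_univ _⟩, pkey_mk c₀ σ₀ g.1 g.2⟩
          intro h
          have h5 := Composition.eq_ones_iff_length.mp h
          rw [mkComp_length] at h5
          omega
        · intro g1 _ g2 _ heq
          exact mk_inj c₀ σ₀ heq
        · intro q hq
          rw [Finset.mem_filter] at hq
          obtain ⟨π, T, hπT⟩ := mk_surj c₀ σ₀ q hq.2
          exact ⟨(π, T), Finset.mem_univ _, hπT⟩
      rw [hbij]
      refine fiber_mem G F z c₀ σ₀ (fun j₀ => ?_) ?_
      · have hmem := lift_mem_lieSpan (fun i => FreeAlgebra.ι ℂ (σ₀ (c₀.embedding j₀ i)))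
          (fun i => LieSubalgebra.subset_lieSpan ⟨_, rfl⟩)
          (hF (c₀.blocksFun j₀) (c₀.one_le_blocksFun j₀)
            (fun i => z (σ₀ (c₀.embedding j₀ i))))
        have heq2 : FreeAlgebra.lift ℂ (fun i => FreeAlgebra.ι ℂ (σ₀ (c₀.embedding j₀ i)))
            (∑ τ : Equiv.Perm (Fin (c₀.blocksFun j₀)),
              F (c₀.blocksFun j₀) ((fun i => z (σ₀ (c₀.embedding j₀ i))) ∘ τ) •
                (List.ofFn fun i => FreeAlgebra.ι ℂ (τ i)).prod)
            = ∑ τ : Equiv.Perm (Fin (c₀.blocksFun j₀)),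
              F (c₀.blocksFun j₀) ((fun i => z (σ₀ (c₀.embedding j₀ i))) ∘ τ) •
                (List.ofFn fun i => FreeAlgebra.ι ℂ (σ₀ (c₀.embedding j₀ (τ i)))).prod :=
          lift_symb _ F _
        exact heq2 ▸ hmem
      · exact IH c₀.length hklt hk1 (fun j₀ => ∑ i, z (σ₀ (c₀.embedding j₀ i)))
    have h4 : P1 • (∑ σ : Equiv.Perm (Fin n),
        G n (z ∘ σ) • (List.ofFn fun i => FreeAlgebra.ι ℂ (σ i)).prod)
        = (-1 : ℂ) • ∑ c ∈ Finset.univ.erase (Composition.ones n),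
            ∑ σ : Equiv.Perm (Fin n), coeffGF G F z (c, σ) • wd ⇑σ := by
      rw [neg_one_smul]
      exact eq_neg_of_add_eq_zero_left key0
    have hSz : (∑ σ : Equiv.Perm (Fin n),
        G n (z ∘ σ) • (List.ofFn fun i => FreeAlgebra.ι ℂ (σ i)).prod)
        = (P1⁻¹ * (-1)) • ∑ c ∈ Finset.univ.erase (Composition.ones n),
            ∑ σ : Equiv.Perm (Fin n), coeffGF G F z (c, σ) • wd ⇑σ := by
      calc (∑ σ : Equiv.Perm (Fin n),
          G n (z ∘ σ) • (List.ofFn fun i => FreeAlgebra.ι ℂ (σ i)).prod)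
          = P1⁻¹ • (P1 • ∑ σ : Equiv.Perm (Fin n),
              G n (z ∘ σ) • (List.ofFn fun i => FreeAlgebra.ι ℂ (σ i)).prod) :=
            (inv_smul_smul₀ hP1ne _).symm
        _ = P1⁻¹ • ((-1 : ℂ) • ∑ c ∈ Finset.univ.erase (Composition.ones n),
              ∑ σ : Equiv.Perm (Fin n), coeffGF G F z (c, σ) • wd ⇑σ) := by rw [h4]
        _ = _ := smul_smul _ _ _
    rw [hSz]
    exact (LS n).smul_mem _ hR

end Aux
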